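/- For every real number q with 0 < q < 1 and every natural number d ≥ 2, we have (1−q)/(d+1) < (1/d)·(1 − (1 − q^{d+1}) / ((1−q)(d+1))). That is, the expected cross-edge weight under DropAgg is strictly smaller than the expected cross-edge weight under DropEdge. -/

import Mathlib

lemma bernoulli_strict (q : ℝ) (hq0 : 0 < q) (hq1 : q < 1) :
    ∀ d : ℕ, 2 ≤ d → 1 + (d : ℝ) * (q - 1) < q ^ d := by
  intro d hd
  induction d with
  | zero => omega
  | succ n ih =>
    rcases Nat.lt_or_ge n 2 with h | h
    · interval_cases n
      · omega
      · push_cast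
        nlinarith [sq_nonneg (q - 1)]
    · have h1 := ih h
      have h2 : q ^ n < 1 := pow_lt_one₀ hq0.le hq1 (by omega)
      have : q ^ (n + 1) = q ^ n * q := pow_succ q n
      push_cast
      nlinarith

/-- The expected cross-edge weight under DropAgg, `(1−q)/(d+1)`, is strictly smaller
than the expected cross-edge weight under DropEdge. -/
theorem dropagg_cross_edge_below_dropedge (q : ℝ) (hq0 : 0 < q) (hq1 : q < 1)
    (d : ℕ) (hd : 2 ≤ d) :
    (1 - q) / ((d : ℝ) + 1)
      < (1 / (d : ℝ)) * (1 - (1 - q ^ (d + 1)) / ((1 - q) * ((d : ℝ) + 1))) := by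
  have hb := bernoulli_strict q hq0 hq1 d hd
  have key : q * (1 + (d : ℝ) * (q - 1)) < q ^ (d + 1) := by
    rw [pow_succ]
    nlinarith
  have hd0 : (0:ℝ) < d := by positivity
  have hq : (0:ℝ) < 1 - q := by linarith
  have hd1 : (0:ℝ) < (d:ℝ) + 1 := by linarith
  rw [div_lt_iff₀ hd1]
  have hne : ((1:ℝ)-q) ≠ 0 := ne_of_gt hq
  have hdne : (d:ℝ) ≠ 0 := ne_of_gt hd0
  have hdne1 : ((d:ℝ)+1) ≠ 0 := ne_of_gt hd1
  field_simp
  nlinarith [mul_pos hd0 hq, mul_pos hd1 hq]
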